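/- Let D be a rooted DAG with root r, sink set W, and λ(v) = (⌊log₂ π(r,v)⌋, ⌊log₂ π(v,W)⌋) for each node v, and let E_scd(D) be the set of edges (u,i,v) with λ(u) = λ(v). Then every node of D has at most one outgoing edge in E_scd(D) and at most one incoming edge in E_scd(D); furthermore, every directed path from the root r to a sink node contains at most 2·log₂ n(D) edges that do not belong to E_scd(D). -/

import Mathlib

/-- `Reaches out u v`: there is a directed path from `u` to `v` in the DAG
with ordered out-edge lists `out`. -/
inductive Reaches {V : ℕ} (out : Fin V → List (Fin V)) : Fin V → Fin V → Prop
  | refl (u : Fin V) : Reaches out u u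
  | step {u v w : Fin V} : v ∈ out u → Reaches out v w → Reaches out u w

/-- A rooted DAG: nodes `Fin V`, each node with an ordered list of out-edges
(parallel edges allowed, respecting a topological order, which makes the edge
relation acyclic), and a root `r` with no incoming edges from which every node
is reachable. -/
structure RootedDAG : Type where
  V : ℕ
  out : Fin V → List (Fin V)
  desc : ∀ u : Fin V, ∀ v ∈ out u, v < u
  root : Fin V
  rootNoIn : ∀ u : Fin V, root ∉ out u
  reach : ∀ v : Fin V, Reaches out root v

namespace RootedDAG

/-- `π(u,v)`: the number of directed paths from `u` to `v` (with `π(u,u)=1`). -/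
def pathCount (D : RootedDAG) (u v : Fin D.V) : ℕ :=
  if u = v then 1
  else ((D.out u).attach.map (fun x => D.pathCount x.1 v)).sum
termination_by (u : ℕ)
decreasing_by exact D.desc u x.1 x.2

/-- The set `W` of sink nodes of `D`. -/
def sinks (D : RootedDAG) : Finset (Fin D.V) :=
  Finset.univ.filter (fun w => D.out w = [])

/-- `π(u,W)`: the number of directed paths from `u` to some sink. -/
def pathToSinks (D : RootedDAG) (u : Fin D.V) : ℕ :=
  ∑ w ∈ D.sinks, D.pathCount u w

/-- `n(D) = π(r,W)`. -/
def nD (D : RootedDAG) : ℕ := D.pathToSinks D.root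

/-- `λ(v) = (⌊log₂ π(r,v)⌋, ⌊log₂ π(v,W)⌋)`. -/
def lam (D : RootedDAG) (v : Fin D.V) : ℕ × ℕ :=
  (Nat.log 2 (D.pathCount D.root v), Nat.log 2 (D.pathToSinks v))

/-- The `i`-th out-edge of `u` is in `E_scd(D)`, i.e. `λ(u) = λ(v)` for its
target `v`. -/
def ScdEdge (D : RootedDAG) (u : Fin D.V) (i : ℕ) : Prop :=
  ∃ h : i < (D.out u).length, D.lam u = D.lam ((D.out u).get ⟨i, h⟩)

/-- `IsPath D u ps w`: `ps` is the list of (source node, out-edge index) pairs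
of consecutive edges of a directed path from `u` to `w`. -/
inductive IsPath (D : RootedDAG) : Fin D.V → List (Fin D.V × ℕ) → Fin D.V → Prop
  | nil (u : Fin D.V) : IsPath D u [] u
  | cons {u : Fin D.V} {i : ℕ} {ps : List (Fin D.V × ℕ)} {w : Fin D.V}
      (h : i < (D.out u).length) :
      IsPath D ((D.out u).get ⟨i, h⟩) ps w → IsPath D u ((u, i) :: ps) w

open Classical in
/-- The number of edges of the path `ps` that do not belong to `E_scd(D)`. -/
noncomputable def nonScdCount (D : RootedDAG) (ps : List (Fin D.V × ℕ)) : ℕ :=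
  (ps.map (fun p => if D.ScdEdge p.1 p.2 then 0 else 1)).sum

end RootedDAG

namespace RootedDAGAux

lemma two_le_sum : ∀ (l : List ℕ) (i j : ℕ) (hi : i < l.length) (hj : j < l.length),
    i ≠ j → l.get ⟨i, hi⟩ + l.get ⟨j, hj⟩ ≤ l.sum := by
  intro l
  induction l with
  | nil => intro i j hi; simp at hi
  | cons a t ih =>
    intro i j hi hj hij
    match i, j with
    | 0, 0 => exact absurd rfl hij
    | 0, (k+1) =>
      simp only [List.get, List.sum_cons]
      have : t.get ⟨k, by simpa using hj⟩ ≤ t.sum :=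
        List.single_le_sum (fun _ _ => Nat.zero_le _) _ (List.get_mem t _)
      omega
    | (k+1), 0 =>
      simp only [List.get, List.sum_cons]
      have : t.get ⟨k, by simpa using hi⟩ ≤ t.sum :=
        List.single_le_sum (fun _ _ => Nat.zero_le _) _ (List.get_mem t _)
      omega
    | (k+1), (m+1) =>
      simp only [List.get, List.sum_cons]
      have := ih k m (by simpa using hi) (by simpa using hj) (by omega)
      omega

lemma two_le_count {α : Type*} [DecidableEq α] :
    ∀ (l : List α) (a : α) (i j : ℕ) (hi : i < l.length) (hj : j < l.length),
    i ≠ j → l.get ⟨i, hi⟩ = a → l.get ⟨j, hj⟩ = a → 2 ≤ l.count a := by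
  intro l
  induction l with
  | nil => intro a i j hi; simp at hi
  | cons x t ih =>
    intro a i j hi hj hij hga hgb
    match i, j with
    | 0, 0 => exact absurd rfl hij
    | 0, (k+1) =>
      simp only [List.get] at hga hgb
      have h1 : 0 < t.count a := List.count_pos_iff.2 (hgb ▸ List.get_mem t _)
      subst hga; rw [List.count_cons_self]; omega
    | (k+1), 0 =>
      simp only [List.get] at hga hgb
      have h1 : 0 < t.count a := List.count_pos_iff.2 (hga ▸ List.get_mem t _)
      subst hgb; rw [List.count_cons_self]; omega
    | (k+1), (m+1) =>
      simp only [List.get] at hga hgb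
      have h2 := ih a k m (by simpa using hi) (by simpa using hj) (by omega) hga hgb
      have h3 : t.count a ≤ (x :: t).count a := List.count_le_count_cons
      omega

lemma sum_map_eq_sum_count {α : Type*} [Fintype α] [DecidableEq α]
    (l : List α) (f : α → ℕ) :
    (l.map f).sum = ∑ y : α, l.count y * f y := by
  induction l with
  | nil => simp
  | cons a t ih =>
    simp only [List.map_cons, List.sum_cons, ih]
    have : ∀ y : α, (a :: t).count y * f y = t.count y * f y + (if y = a then f y else 0) := by
      intro y
      rw [List.count_cons]
      by_cases h : y = a
      · subst h; simp [add_mul]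
      · have : ¬ (a = y) := fun hh => h hh.symm
        simp [h, this, add_mul]
    rw [Finset.sum_congr rfl (fun y _ => this y), Finset.sum_add_distrib,
      Finset.sum_ite_eq' Finset.univ a f]
    simp [add_comm]

end RootedDAGAux
namespace RootedDAGAux

open RootedDAG

lemma pathCount_eq (D : RootedDAG) (u v : Fin D.V) :
    D.pathCount u v = if u = v then 1
      else ((D.out u).map (fun x => D.pathCount x v)).sum := by
  rw [RootedDAG.pathCount]
  congr 1
  simp

/-- no paths upward: if `a < b` then `π(a,b) = 0`. -/
lemma pathCount_up (D : RootedDAG) : ∀ (n : ℕ) (a b : Fin D.V), a.val ≤ n → a < b →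
    D.pathCount a b = 0 := by
  intro n
  induction n with
  | zero =>
    intro a b ha hab
    rw [pathCount_eq, if_neg (Fin.ne_of_lt hab)]
    apply List.sum_eq_zero
    intro x hx
    simp only [List.mem_map] at hx
    obtain ⟨y, hy, rfl⟩ := hx
    exact absurd (D.desc a y hy) (by omega)
  | succ n ih =>
    intro a b ha hab
    rw [pathCount_eq, if_neg (Fin.ne_of_lt hab)]
    apply List.sum_eq_zero
    intro x hx
    simp only [List.mem_map] at hx
    obtain ⟨y, hy, rfl⟩ := hx
    have hya := D.desc a y hy
    exact ih y b (by omega) (lt_trans hya hab)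

lemma pathCount_zero_of_lt (D : RootedDAG) {a b : Fin D.V} (h : a < b) :
    D.pathCount a b = 0 :=
  pathCount_up D a.val a b le_rfl h

/-- forward recurrence, additive form. -/
lemma fr (D : RootedDAG) (x y : Fin D.V) :
    D.pathCount x y = (if x = y then 1 else 0)
      + ∑ u' : Fin D.V, (D.out x).count u' * D.pathCount u' y := by
  by_cases h : x = y
  · subst h
    rw [pathCount_eq, if_pos rfl, if_pos rfl]
    have hz : ∀ u' : Fin D.V, u' ∈ Finset.univ →
        (D.out x).count u' * D.pathCount u' x = 0 := by
      intro u' _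
      by_cases hc : u' ∈ D.out x
      · rw [pathCount_zero_of_lt D (D.desc x u' hc), mul_zero]
      · rw [List.count_eq_zero.2 hc, zero_mul]
    rw [Finset.sum_eq_zero hz]
    omega
  · rw [pathCount_eq, if_neg h, if_neg h, zero_add,
      sum_map_eq_sum_count]

/-- backward recurrence. -/
lemma br_aux (D : RootedDAG) : ∀ (n : ℕ) (x v : Fin D.V), x.val ≤ n →
    D.pathCount x v = (if x = v then 1 else 0)
      + ∑ u' : Fin D.V, (D.out u').count v * D.pathCount x u' := by
  have key : ∀ (n : ℕ), (∀ (y v : Fin D.V), y.val < n →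
      D.pathCount y v = (if y = v then 1 else 0)
        + ∑ u' : Fin D.V, (D.out u').count v * D.pathCount y u') →
      ∀ (x v : Fin D.V), x.val ≤ n →
      D.pathCount x v = (if x = v then 1 else 0)
        + ∑ u' : Fin D.V, (D.out u').count v * D.pathCount x u' := by
    intro n IH x v hx
    by_cases hxv : x = v
    · subst hxv
      rw [if_pos rfl]
      have hz : ∀ u' : Fin D.V, u' ∈ Finset.univ →
          (D.out u').count x * D.pathCount x u' = 0 := by
        intro u' _
        by_cases hc : x ∈ D.out u'
        · rw [pathCount_zero_of_lt D (D.desc u' x hc), mul_zero]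
        · rw [List.count_eq_zero.2 hc, zero_mul]
      rw [Finset.sum_eq_zero hz, pathCount_eq, if_pos rfl]
      omega
    · rw [if_neg hxv, zero_add]
      have lhs1 : D.pathCount x v
          = ∑ y : Fin D.V, (D.out x).count y * D.pathCount y v := by
        rw [fr, if_neg hxv, zero_add]
      have step : ∀ y : Fin D.V, y ∈ Finset.univ →
          (D.out x).count y * D.pathCount y v
          = (D.out x).count y * ((if y = v then 1 else 0)
              + ∑ u' : Fin D.V, (D.out u').count v * D.pathCount y u') := by
        intro y _
        by_cases hc : y ∈ D.out x
        · have hyx : y < x := D.desc x y hc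
          rw [IH y v (by omega)]
        · rw [List.count_eq_zero.2 hc, zero_mul, zero_mul]
      rw [lhs1, Finset.sum_congr rfl step]
      have rhs1 : ∀ u' : Fin D.V, u' ∈ Finset.univ →
          (D.out u').count v * D.pathCount x u'
          = (D.out u').count v * ((if x = u' then 1 else 0)
              + ∑ y : Fin D.V, (D.out x).count y * D.pathCount y u') := by
        intro u' _
        rw [← fr]
      rw [Finset.sum_congr rfl rhs1]
      have L : (∑ y : Fin D.V, (D.out x).count y * ((if y = v then 1 else 0)
          + ∑ u' : Fin D.V, (D.out u').count v * D.pathCount y u'))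
          = (D.out x).count v + ∑ u' : Fin D.V, ∑ y : Fin D.V,
              (D.out u').count v * ((D.out x).count y * D.pathCount y u') := by
        simp only [mul_add, Finset.sum_add_distrib, mul_ite, mul_one, mul_zero,
          Finset.mul_sum]
        congr 1
        · exact (Finset.sum_ite_eq' Finset.univ v _).trans (if_pos (Finset.mem_univ v))
        · rw [Finset.sum_comm]
          exact Finset.sum_congr rfl fun u' _ => Finset.sum_congr rfl fun y _ => by ring
      have R : (∑ u' : Fin D.V, (D.out u').count v * ((if x = u' then 1 else 0)
          + ∑ y : Fin D.V, (D.out x).count y * D.pathCount y u'))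
          = (D.out x).count v + ∑ u' : Fin D.V, ∑ y : Fin D.V,
              (D.out u').count v * ((D.out x).count y * D.pathCount y u') := by
        simp only [mul_add, Finset.sum_add_distrib, mul_ite, mul_one, mul_zero,
          Finset.mul_sum]
        congr 1
        · rw [Finset.sum_ite_eq Finset.univ x (fun u' => (D.out u').count v)]
          simp
      rw [L, R]
  intro n
  induction n with
  | zero => exact key 0 (by omega)
  | succ n ih => exact key (n+1) (fun y v hy => ih y v (by omega))

lemma br (D : RootedDAG) (x v : Fin D.V) :
    D.pathCount x v = (if x = v then 1 else 0)
      + ∑ u' : Fin D.V, (D.out u').count v * D.pathCount x u' :=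
  br_aux D x.val x v le_rfl

/-- `π(u,W)` recurrence. -/
lemma pts_rec (D : RootedDAG) (u : Fin D.V) :
    D.pathToSinks u = (if D.out u = [] then 1 else 0)
      + ∑ y : Fin D.V, (D.out u).count y * D.pathToSinks y := by
  unfold RootedDAG.pathToSinks
  rw [Finset.sum_congr rfl (fun w _ => fr D u w), Finset.sum_add_distrib]
  congr 1
  · by_cases h : D.out u = []
    · rw [if_pos h]
      have hu : u ∈ D.sinks := by simp [RootedDAG.sinks, h]
      rw [Finset.sum_ite_eq D.sinks u (fun _ => 1), if_pos hu]
    · rw [if_neg h]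
      apply Finset.sum_eq_zero
      intro w hw
      have : u ≠ w := by
        intro he
        subst he
        simp [RootedDAG.sinks] at hw
        exact h hw
      rw [if_neg this]
  · rw [Finset.sum_comm]
    exact Finset.sum_congr rfl (fun y _ => by rw [Finset.mul_sum])

lemma pts_sink (D : RootedDAG) {w : Fin D.V} (h : D.out w = []) :
    D.pathToSinks w = 1 := by
  rw [pts_rec, if_pos h]
  have : ∀ y : Fin D.V, y ∈ Finset.univ →
      (D.out w).count y * D.pathToSinks y = 0 := by
    intro y _
    rw [h]
    simp
  rw [Finset.sum_eq_zero this]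
  omega

lemma pts_pos (D : RootedDAG) : ∀ (n : ℕ) (u : Fin D.V), u.val ≤ n →
    1 ≤ D.pathToSinks u := by
  have key : ∀ (n : ℕ), (∀ y : Fin D.V, y.val < n → 1 ≤ D.pathToSinks y) →
      ∀ u : Fin D.V, u.val ≤ n → 1 ≤ D.pathToSinks u := by
    intro n IH u hu
    by_cases h : D.out u = []
    · rw [pts_sink D h]
    · obtain ⟨y, hy⟩ := List.exists_mem_of_ne_nil _ h
      have hylt := D.desc u y hy
      have h1 : 1 ≤ (D.out u).count y := List.count_pos_iff.2 hy
      have h2 : 1 ≤ D.pathToSinks y := IH y (by omega)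
      calc 1 ≤ (D.out u).count y * D.pathToSinks y := Nat.one_le_iff_ne_zero.2 (by positivity)
        _ ≤ ∑ y' : Fin D.V, (D.out u).count y' * D.pathToSinks y' :=
            Finset.single_le_sum (f := fun y' => (D.out u).count y' * D.pathToSinks y')
              (fun _ _ => Nat.zero_le _) (Finset.mem_univ y)
        _ ≤ _ := by rw [pts_rec]; omega
  intro n
  induction n with
  | zero => exact key 0 (by omega)
  | succ n ih => exact key (n+1) (fun y hy => ih y (by omega))

lemma pts_pos' (D : RootedDAG) (u : Fin D.V) : 1 ≤ D.pathToSinks u :=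
  pts_pos D u.val u le_rfl

lemma reaches_pos (D : RootedDAG) {u v : Fin D.V} (h : Reaches D.out u v) :
    1 ≤ D.pathCount u v := by
  induction h with
  | refl u => rw [pathCount_eq, if_pos rfl]
  | @step u y w hy _ ih =>
    by_cases huw : u = w
    · rw [pathCount_eq, if_pos huw]
    · have h1 : 1 ≤ (D.out u).count y := List.count_pos_iff.2 hy
      calc 1 ≤ (D.out u).count y * D.pathCount y w :=
            Nat.one_le_iff_ne_zero.2 (by positivity)
        _ ≤ ∑ y' : Fin D.V, (D.out u).count y' * D.pathCount y' w :=
            Finset.single_le_sum (f := fun y' => (D.out u).count y' * D.pathCount y' w)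
              (fun _ _ => Nat.zero_le _) (Finset.mem_univ y)
        _ ≤ _ := by rw [fr D u w]; omega

lemma root_pos (D : RootedDAG) (v : Fin D.V) : 1 ≤ D.pathCount D.root v :=
  reaches_pos D (D.reach v)

/-- monotonicity along an edge: `π(r,u) ≤ π(r,v)` when `v ∈ out u`. -/
lemma mono_root (D : RootedDAG) {u v : Fin D.V} (h : v ∈ D.out u) :
    D.pathCount D.root u ≤ D.pathCount D.root v := by
  have h1 : 1 ≤ (D.out u).count v := List.count_pos_iff.2 h
  calc D.pathCount D.root u ≤ (D.out u).count v * D.pathCount D.root u :=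
        Nat.le_mul_of_pos_left _ h1
    _ ≤ ∑ u' : Fin D.V, (D.out u').count v * D.pathCount D.root u' :=
        Finset.single_le_sum (f := fun u' => (D.out u').count v * D.pathCount D.root u')
          (fun _ _ => Nat.zero_le _) (Finset.mem_univ u)
    _ ≤ _ := by rw [br D D.root v]; omega

lemma mono_sinks (D : RootedDAG) {u v : Fin D.V} (h : v ∈ D.out u) :
    D.pathToSinks v ≤ D.pathToSinks u := by
  have h1 : 1 ≤ (D.out u).count v := List.count_pos_iff.2 h
  calc D.pathToSinks v ≤ (D.out u).count v * D.pathToSinks v :=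
        Nat.le_mul_of_pos_left _ h1
    _ ≤ ∑ y : Fin D.V, (D.out u).count y * D.pathToSinks y :=
        Finset.single_le_sum (f := fun y => (D.out u).count y * D.pathToSinks y)
          (fun _ _ => Nat.zero_le _) (Finset.mem_univ v)
    _ ≤ _ := by rw [pts_rec]; omega

end RootedDAGAux
namespace RootedDAGAux

open RootedDAG

lemma pow_log_le (m : ℕ) (hm : 1 ≤ m) : 2 ^ Nat.log 2 m ≤ m :=
  Nat.pow_log_le_self 2 (by omega)

lemma lt_pow_log (m : ℕ) : m < 2 ^ (Nat.log 2 m + 1) :=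
  Nat.lt_pow_succ_log_self one_lt_two m

lemma part1 (D : RootedDAG) (u : Fin D.V) (i j : ℕ)
    (hi : D.ScdEdge u i) (hj : D.ScdEdge u j) : i = j := by
  by_contra hij
  obtain ⟨hil, hlami⟩ := hi
  obtain ⟨hjl, hlamj⟩ := hj
  set vi := (D.out u).get ⟨i, hil⟩ with hvi
  set vj := (D.out u).get ⟨j, hjl⟩ with hvj
  set k := Nat.log 2 (D.pathToSinks u) with hk
  have hki : Nat.log 2 (D.pathToSinks vi) = k := (congrArg Prod.snd hlami).symm
  have hkj : Nat.log 2 (D.pathToSinks vj) = k := (congrArg Prod.snd hlamj).symm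
  have hpi : 2 ^ k ≤ D.pathToSinks vi := hki ▸ pow_log_le _ (pts_pos' D vi)
  have hpj : 2 ^ k ≤ D.pathToSinks vj := hkj ▸ pow_log_le _ (pts_pos' D vj)
  set l := (D.out u).map (fun x => D.pathToSinks x) with hl
  have hlen : l.length = (D.out u).length := List.length_map _
  have hgi : l.get ⟨i, by omega⟩ = D.pathToSinks vi := by
    simp [hl, List.get_eq_getElem, List.getElem_map, hvi]
  have hgj : l.get ⟨j, by omega⟩ = D.pathToSinks vj := by
    simp [hl, List.get_eq_getElem, List.getElem_map, hvj]
  have h2 : D.pathToSinks vi + D.pathToSinks vj ≤ l.sum := by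
    rw [← hgi, ← hgj]; exact two_le_sum l i j _ _ hij
  have h3 : l.sum ≤ D.pathToSinks u := by
    rw [hl, sum_map_eq_sum_count, pts_rec D u]; omega
  have h4 : D.pathToSinks u < 2 ^ (k + 1) := lt_pow_log _
  have : (2:ℕ) ^ (k+1) = 2 ^ k + 2 ^ k := by ring
  omega

lemma part2 (D : RootedDAG) (v u u' : Fin D.V) (i i' : ℕ)
    (h : i < (D.out u).length) (h' : i' < (D.out u').length)
    (hgv : (D.out u).get ⟨i, h⟩ = v) (hgv' : (D.out u').get ⟨i', h'⟩ = v)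
    (hscd : D.ScdEdge u i) (hscd' : D.ScdEdge u' i') : u = u' ∧ i = i' := by
  obtain ⟨hl, hlam⟩ := hscd
  obtain ⟨hl', hlam'⟩ := hscd'
  have hlam2 : D.lam u = D.lam v := by
    have : (D.out u).get ⟨i, hl⟩ = v := hgv
    rwa [this] at hlam
  have hlam2' : D.lam u' = D.lam v := by
    have : (D.out u').get ⟨i', hl'⟩ = v := hgv'
    rwa [this] at hlam'
  set K := Nat.log 2 (D.pathCount D.root v) with hK
  have hKu : Nat.log 2 (D.pathCount D.root u) = K := congrArg Prod.fst hlam2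
  have hKu' : Nat.log 2 (D.pathCount D.root u') = K := congrArg Prod.fst hlam2'
  have hpu : 2 ^ K ≤ D.pathCount D.root u := hKu ▸ pow_log_le _ (root_pos D u)
  have hpu' : 2 ^ K ≤ D.pathCount D.root u' := hKu' ▸ pow_log_le _ (root_pos D u')
  have hv : D.pathCount D.root v < 2 ^ (K + 1) := lt_pow_log _
  have hbr : ∑ x : Fin D.V, (D.out x).count v * D.pathCount D.root x
      ≤ D.pathCount D.root v := by
    rw [br D D.root v]; omega
  have hmemu : v ∈ D.out u := hgv ▸ List.get_mem _ _
  have hcu : 1 ≤ (D.out u).count v := List.count_pos_iff.2 hmemu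
  have hpow : (2:ℕ) ^ (K+1) = 2 ^ K + 2 ^ K := by ring
  have huu : u = u' := by
    by_contra hne
    have hmemu' : v ∈ D.out u' := hgv' ▸ List.get_mem _ _
    have hcu' : 1 ≤ (D.out u').count v := List.count_pos_iff.2 hmemu'
    have hpair : (D.out u).count v * D.pathCount D.root u
        + (D.out u').count v * D.pathCount D.root u'
        ≤ ∑ x : Fin D.V, (D.out x).count v * D.pathCount D.root x := by
      have hsub := Finset.sum_le_sum_of_subset
        (f := fun x => (D.out x).count v * D.pathCount D.root x)
        (Finset.subset_univ ({u, u'} : Finset (Fin D.V)))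
      rwa [Finset.sum_pair hne] at hsub
    have t1 : 2 ^ K ≤ (D.out u).count v * D.pathCount D.root u :=
      le_trans hpu (Nat.le_mul_of_pos_left _ hcu)
    have t2 : 2 ^ K ≤ (D.out u').count v * D.pathCount D.root u' :=
      le_trans hpu' (Nat.le_mul_of_pos_left _ hcu')
    omega
  subst huu
  refine ⟨rfl, ?_⟩
  by_contra hne
  have hc2 : 2 ≤ (D.out u).count v := two_le_count (D.out u) v i i' h h' hne hgv hgv'
  have hsingle : (D.out u).count v * D.pathCount D.root u
      ≤ ∑ x : Fin D.V, (D.out x).count v * D.pathCount D.root x :=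
    Finset.single_le_sum (f := fun x => (D.out x).count v * D.pathCount D.root x)
      (fun _ _ => Nat.zero_le _) (Finset.mem_univ u)
  have t1 : 2 ^ K + 2 ^ K ≤ (D.out u).count v * D.pathCount D.root u := by
    calc 2 ^ K + 2 ^ K = 2 * 2 ^ K := by ring
      _ ≤ (D.out u).count v * D.pathCount D.root u := Nat.mul_le_mul hc2 hpu
  omega

lemma nonScdCount_nil (D : RootedDAG) : D.nonScdCount [] = 0 := by
  simp [RootedDAG.nonScdCount]

open Classical in
lemma nonScdCount_cons (D : RootedDAG) (u : Fin D.V) (i : ℕ) (ps : List (Fin D.V × ℕ)) :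
    D.nonScdCount ((u, i) :: ps)
      = (if D.ScdEdge u i then 0 else 1) + D.nonScdCount ps := by
  simp [RootedDAG.nonScdCount]

lemma path_bound (D : RootedDAG) {u : Fin D.V} {ps : List (Fin D.V × ℕ)} {w : Fin D.V}
    (hp : D.IsPath u ps w) :
    (D.nonScdCount ps : ℤ)
      ≤ ((Nat.log 2 (D.pathCount D.root w) : ℤ) - (Nat.log 2 (D.pathCount D.root u) : ℤ))
        + ((Nat.log 2 (D.pathToSinks u) : ℤ) - (Nat.log 2 (D.pathToSinks w) : ℤ)) := by
  induction hp with
  | nil u => simp [nonScdCount_nil]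
  | @cons u i ps w h hrest ih =>
    set v := (D.out u).get ⟨i, h⟩ with hv
    have hmem : v ∈ D.out u := List.get_mem _ _
    have hf : Nat.log 2 (D.pathCount D.root u) ≤ Nat.log 2 (D.pathCount D.root v) :=
      Nat.log_mono_right (mono_root D hmem)
    have hg : Nat.log 2 (D.pathToSinks v) ≤ Nat.log 2 (D.pathToSinks u) :=
      Nat.log_mono_right (mono_sinks D hmem)
    rw [nonScdCount_cons]
    by_cases hs : D.ScdEdge u i
    · obtain ⟨hl, hlam⟩ := hs
      have hlam2 : D.lam u = D.lam v := hlam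
      have e1 : Nat.log 2 (D.pathCount D.root u) = Nat.log 2 (D.pathCount D.root v) :=
        congrArg Prod.fst hlam2
      have e2 : Nat.log 2 (D.pathToSinks u) = Nat.log 2 (D.pathToSinks v) :=
        by have := congrArg Prod.snd hlam2; exact this
      rw [if_pos ⟨hl, hlam⟩]
      push_cast
      rw [e1, e2]
      omega
    · rw [if_neg hs]
      have hne : D.lam u ≠ D.lam v := fun he => hs ⟨h, he⟩
      have hdisj : Nat.log 2 (D.pathCount D.root u) ≠ Nat.log 2 (D.pathCount D.root v)
          ∨ Nat.log 2 (D.pathToSinks u) ≠ Nat.log 2 (D.pathToSinks v) := by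
        by_cases h1 : Nat.log 2 (D.pathCount D.root u) = Nat.log 2 (D.pathCount D.root v)
        · right
          intro h2
          exact hne (Prod.ext h1 h2)
        · left; exact h1
      push_cast
      rcases hdisj with hd | hd
      · have : Nat.log 2 (D.pathCount D.root u) < Nat.log 2 (D.pathCount D.root v) := by
          omega
        omega
      · have : Nat.log 2 (D.pathToSinks v) < Nat.log 2 (D.pathToSinks u) := by omega
        omega

lemma part3 (D : RootedDAG) (ps : List (Fin D.V × ℕ)) (w : Fin D.V)
    (hp : D.IsPath D.root ps w) (hw : D.out w = []) :
    (D.nonScdCount ps : ℝ) ≤ 2 * Real.logb 2 (D.nD) := by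
  have hb := path_bound D hp
  have hroot1 : D.pathCount D.root D.root = 1 := by rw [pathCount_eq, if_pos rfl]
  have hfr : Nat.log 2 (D.pathCount D.root D.root) = 0 := by
    rw [hroot1]; exact Nat.log_one_right 2
  have hgw : Nat.log 2 (D.pathToSinks w) = 0 := by
    rw [pts_sink D hw]; exact Nat.log_one_right 2
  have hwle : D.pathCount D.root w ≤ D.nD := by
    have hwin : w ∈ D.sinks := by simp [RootedDAG.sinks, hw]
    exact Finset.single_le_sum (f := fun w' => D.pathCount D.root w')
      (fun _ _ => Nat.zero_le _) hwin
  have hfw : Nat.log 2 (D.pathCount D.root w) ≤ Nat.log 2 D.nD :=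
    Nat.log_mono_right hwle
  have hgr : Nat.log 2 (D.pathToSinks D.root) = Nat.log 2 D.nD := rfl
  have hN : D.nonScdCount ps ≤ 2 * Nat.log 2 D.nD := by
    rw [hfr, hgw, hgr] at hb
    omega
  calc (D.nonScdCount ps : ℝ) ≤ ((2 * Nat.log 2 D.nD : ℕ) : ℝ) := by exact_mod_cast hN
    _ = 2 * ((Nat.log 2 D.nD : ℕ) : ℝ) := by push_cast; ring
    _ ≤ 2 * Real.logb 2 (D.nD) := by
        have h1 := Real.natLog_le_logb D.nD 2
        have h2 : ((2:ℕ):ℝ) = 2 := by norm_num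
        rw [h2] at h1
        linarith

end RootedDAGAux

/-- Ganardi et al., symmetric centroid decomposition.
In any rooted DAG `D`, every node has at most one outgoing and at most one
incoming edge in `E_scd(D)`, and every directed path from the root to a sink
contains at most `2·log₂ n(D)` edges not in `E_scd(D)`. -/
theorem scd_decomposition (D : RootedDAG) :
    (∀ (u : Fin D.V) (i j : ℕ), D.ScdEdge u i → D.ScdEdge u j → i = j) ∧
    (∀ (v u u' : Fin D.V) (i i' : ℕ)
      (h : i < (D.out u).length) (h' : i' < (D.out u').length),
      (D.out u).get ⟨i, h⟩ = v → (D.out u').get ⟨i', h'⟩ = v →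
      D.ScdEdge u i → D.ScdEdge u' i' → u = u' ∧ i = i') ∧
    (∀ (ps : List (Fin D.V × ℕ)) (w : Fin D.V),
      D.IsPath D.root ps w → D.out w = [] →
      (D.nonScdCount ps : ℝ) ≤ 2 * Real.logb 2 (D.nD)) := by
  exact ⟨RootedDAGAux.part1 D, RootedDAGAux.part2 D, RootedDAGAux.part3 D⟩
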